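/- Feasibility of the moment-constrained Wasserstein ball: Let s₁, …, s_N ∈ ℝⁿ with empirical measure Q_N and sample mean s̄, let φ ∈ ℝⁿ with φ ≠ 0, let δ > 0, and let α ∈ ℝ satisfy (α − φ·s̄)² ≤ δ·‖φ‖₂². Then there exists a Borel probability measure Q on ℝⁿ with D_c(Q, Q_N) ≤ δ and E^Q[φ·S] = α. -/

import Mathlib

open MeasureTheory
open scoped ENNReal BigOperators

/-- Euclidean dot product on `Fin n → ℝ`. -/
noncomputable def eDot {n : ℕ} (a b : Fin n → ℝ) : ℝ := ∑ i, a i * b i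

/-- Transport cost of a coupling `π` for the quadratic cost `c(u,v) = ‖u − v‖₂²`. -/
noncomputable def transportCost {n : ℕ}
    (π : Measure ((Fin n → ℝ) × (Fin n → ℝ))) : ℝ≥0∞ :=
  ∫⁻ p, ENNReal.ofReal (∑ i, (p.1 i - p.2 i) ^ 2) ∂π

/-- Optimal transport cost `D_c(Q, Q')` with quadratic cost `c(u,v) = ‖u − v‖₂²`. -/
noncomputable def otCost {n : ℕ} (Q Q' : Measure (Fin n → ℝ)) : ℝ≥0∞ :=
  sInf { r | ∃ π : Measure ((Fin n → ℝ) × (Fin n → ℝ)),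
      IsProbabilityMeasure π ∧ π.map Prod.fst = Q ∧ π.map Prod.snd = Q' ∧
      r = transportCost π }

/-- Empirical measure `Q_N = (1/N)·Σᵢ δ_{sᵢ}` of the sample points `s₁, …, s_N`. -/
noncomputable def empiricalMeasure {n N : ℕ} (s : Fin N → (Fin n → ℝ)) :
    Measure (Fin n → ℝ) :=
  (N : ℝ≥0∞)⁻¹ • ∑ i, Measure.dirac (s i)


lemma aux_meas_eDot {n : ℕ} (φ : Fin n → ℝ) :
    StronglyMeasurable (fun x : Fin n → ℝ => eDot φ x) := by
  apply Continuous.stronglyMeasurable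
  unfold eDot
  continuity

lemma aux_prob {n N : ℕ} (hN : 0 < N) (s : Fin N → (Fin n → ℝ)) :
    IsProbabilityMeasure (empiricalMeasure s) := by
  constructor
  have hN' : (N : ℝ≥0∞) ≠ 0 := by exact_mod_cast hN.ne'
  simp [empiricalMeasure, Measure.smul_apply, Measure.finset_sum_apply,
    ENNReal.inv_mul_cancel hN' (by simp : (N : ℝ≥0∞) ≠ ⊤)]

lemma aux_prob_pair {N : ℕ} {β : Type*} [MeasurableSpace β] (hN : 0 < N)
    (p : Fin N → β) :
    IsProbabilityMeasure ((N : ℝ≥0∞)⁻¹ • ∑ i, Measure.dirac (p i)) := by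
  constructor
  have hN' : (N : ℝ≥0∞) ≠ 0 := by exact_mod_cast hN.ne'
  simp [Measure.smul_apply, Measure.finset_sum_apply,
    ENNReal.inv_mul_cancel hN' (by simp : (N : ℝ≥0∞) ≠ ⊤)]

lemma aux_integrable {n N : ℕ} (hN : 0 < N) (φ : Fin n → ℝ) (s : Fin N → (Fin n → ℝ)) :
    Integrable (fun x => eDot φ x) (empiricalMeasure s) := by
  unfold empiricalMeasure
  refine Integrable.smul_measure ?_ (by simp [hN.ne'])
  refine integrable_finset_sum_measure.mpr fun i _ => ?_
  refine ⟨(aux_meas_eDot φ).aestronglyMeasurable, ?_⟩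
  simp [HasFiniteIntegral, lintegral_dirac]

/-- **Feasibility of the moment-constrained Wasserstein ball.**
For sample points `s₁, …, s_N` with empirical measure `Q_N` and sample mean
`s̄`, `φ ≠ 0`, `δ > 0`, and `α` with `(α − φ·s̄)² ≤ δ‖φ‖₂²`, there is a Borel
probability measure `Q` with `D_c(Q, Q_N) ≤ δ` and `E^Q[φ·S] = α`. -/
theorem stmt_14 {n N : ℕ} (hN : 0 < N) (s : Fin N → (Fin n → ℝ))
    (φ : Fin n → ℝ) (hφ : φ ≠ 0) (δ : ℝ) (hδ : 0 < δ) (α : ℝ) :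
    let sbar : Fin n → ℝ := fun j => (N : ℝ)⁻¹ * ∑ i, s i j
    let nsq : ℝ := ∑ i, φ i ^ 2
    (α - eDot φ sbar) ^ 2 ≤ δ * nsq →
    ∃ Q : Measure (Fin n → ℝ), IsProbabilityMeasure Q ∧
      otCost Q (empiricalMeasure s) ≤ ENNReal.ofReal δ ∧
      Integrable (fun x => eDot φ x) Q ∧ (∫ x, eDot φ x ∂Q) = α := by
  intro sbar nsq hα
  have hNne : (N : ℝ≥0∞) ≠ 0 := by exact_mod_cast hN.ne'
  have hNR : (0 : ℝ) < N := by exact_mod_cast hN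
  obtain ⟨j, hj⟩ := Function.ne_iff.mp hφ
  have hj' : φ j ≠ 0 := by simpa using hj
  have hnsq : 0 < nsq :=
    Finset.sum_pos' (fun i _ => sq_nonneg _) ⟨j, Finset.mem_univ j, by positivity⟩
  set t : ℝ := (α - eDot φ sbar) / nsq with ht
  set s' : Fin N → (Fin n → ℝ) := fun i => s i + t • φ with hs'
  have hdot : ∀ v : Fin n → ℝ, eDot φ (v + t • φ) = eDot φ v + t * nsq := by
    intro v
    simp only [eDot, Pi.add_apply, Pi.smul_apply, smul_eq_mul, mul_add,
      Finset.sum_add_distrib, nsq, Finset.mul_sum]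
    congr 1
    apply Finset.sum_congr rfl
    intro x _
    ring
  refine ⟨empiricalMeasure s', aux_prob hN s', ?_, aux_integrable hN φ s', ?_⟩
  · -- transport cost bound
    set π : Measure ((Fin n → ℝ) × (Fin n → ℝ)) :=
      (N : ℝ≥0∞)⁻¹ • ∑ i, Measure.dirac ((s' i, s i)) with hπ
    have hmem : transportCost π ∈ { r | ∃ π : Measure ((Fin n → ℝ) × (Fin n → ℝ)),
        IsProbabilityMeasure π ∧ π.map Prod.fst = empiricalMeasure s' ∧
        π.map Prod.snd = empiricalMeasure s ∧ r = transportCost π } := by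
      refine ⟨π, aux_prob_pair hN _, ?_, ?_, rfl⟩
      · rw [hπ, Measure.map_smul, ← Measure.mapₗ_apply_of_measurable measurable_fst, map_sum]
        simp [empiricalMeasure, Measure.mapₗ_apply_of_measurable measurable_fst,
          Measure.map_dirac' measurable_fst]
      · rw [hπ, Measure.map_smul, ← Measure.mapₗ_apply_of_measurable measurable_snd, map_sum]
        simp [empiricalMeasure, Measure.mapₗ_apply_of_measurable measurable_snd,
          Measure.map_dirac' measurable_snd]
    refine le_trans (sInf_le hmem) ?_
    have hcostpt : ∀ i : Fin N,
        (∑ k, ((s' i) k - (s i) k) ^ 2) = t ^ 2 * nsq := by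
      intro i
      simp only [hs', Pi.add_apply, Pi.smul_apply, smul_eq_mul, add_sub_cancel_left, nsq,
        Finset.mul_sum]
      apply Finset.sum_congr rfl
      intro x _
      ring
    have hmeas : Measurable (fun p : (Fin n → ℝ) × (Fin n → ℝ) =>
        ENNReal.ofReal (∑ i, (p.1 i - p.2 i) ^ 2)) := by
      apply ENNReal.measurable_ofReal.comp
      apply Finset.measurable_sum
      intro i _
      exact ((measurable_pi_apply i).comp measurable_fst |>.sub
        ((measurable_pi_apply i).comp measurable_snd)).pow_const 2
    have hTC : transportCost π = ENNReal.ofReal (t ^ 2 * nsq) := by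
      rw [transportCost, hπ, lintegral_smul_measure, lintegral_finset_sum_measure]
      simp only [lintegral_dirac' _ hmeas]
      simp only [hcostpt]
      rw [Finset.sum_const, Finset.card_univ, Fintype.card_fin, nsmul_eq_mul,
        smul_eq_mul, ← mul_assoc, ENNReal.inv_mul_cancel hNne (by simp), one_mul]
    rw [hTC]
    apply ENNReal.ofReal_le_ofReal
    have : t ^ 2 * nsq = (α - eDot φ sbar) ^ 2 / nsq := by
      rw [ht, div_pow, pow_two nsq, div_mul_eq_mul_div, mul_div_mul_right _ _ hnsq.ne']
    rw [this, div_le_iff₀ hnsq]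
    exact hα
  · -- moment constraint
    have hint : ∀ i : Fin N, Integrable (fun x => eDot φ x) (Measure.dirac (s' i)) := by
      intro i
      refine ⟨(aux_meas_eDot φ).aestronglyMeasurable, ?_⟩
      simp [HasFiniteIntegral, lintegral_dirac]
    rw [empiricalMeasure, integral_smul_measure,
      integral_finset_sum_measure (fun i _ => hint i)]
    simp only [integral_dirac]
    have hsum : ∑ i, eDot φ (s' i) = (∑ i, eDot φ (s i)) + N * (t * nsq) := by
      simp only [hs', hdot, Finset.sum_add_distrib, Finset.sum_const, Finset.card_univ,
        Fintype.card_fin, nsmul_eq_mul]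
    have hbar : eDot φ sbar = (N : ℝ)⁻¹ * ∑ i, eDot φ (s i) := by
      simp only [eDot, sbar, Finset.mul_sum]
      rw [Finset.sum_comm]
      congr 1; ext i; congr 1; ext k; ring
    have htn : t * nsq = α - eDot φ sbar := by
      rw [ht, div_mul_cancel₀ _ hnsq.ne']
    rw [hsum]
    have htoR : ((N : ℝ≥0∞)⁻¹).toReal = (N : ℝ)⁻¹ := by
      simp
    rw [htoR, smul_eq_mul, mul_add, ← hbar, ← mul_assoc, inv_mul_cancel₀ hNR.ne', one_mul, htn]
    ring
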